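/- Let S¹ = (a¹, C¹), S² = (a², C²), S³ = (a³, C³) be three MMSets, and for r, s ∈ {1,2,3} define AE₁(S^r, S^s) := 2 ∑_{i,j} a^r_i a^s_j W^{rs}(i,j) − ∑_{i,j} a^r_i a^r_j W^{rr}(i,j) − ∑_{i,j} a^s_i a^s_j W^{ss}(i,j), where W^{rs}(i,j) is the infimum over Q ∈ U(a^r, a^s) of ∑_{k,l} Q_{kl} |C^r_{ik} − C^s_{jl}|. Then AE₁ satisfies the pseudometric triangle inequality after taking square roots: √AE₁(S¹,S³) ≤ √AE₁(S¹,S²) + √AE₁(S²,S³). -/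

import Mathlib

open Finset

/-- A probability vector: nonnegative entries summing to 1. -/
def IsProbVec {n : ℕ} (a : Fin n → ℝ) : Prop :=
  (∀ i, 0 ≤ a i) ∧ ∑ i, a i = 1

/-- The transportation polytope `U(a,b)`. -/
def transportPolytope {n m : ℕ} (a : Fin n → ℝ) (b : Fin m → ℝ) :
    Set (Fin n → Fin m → ℝ) :=
  {P | (∀ i j, 0 ≤ P i j) ∧ (∀ i, ∑ j, P i j = a i) ∧ (∀ j, ∑ i, P i j = b j)}

/-- The 1-Wasserstein distance between the anchor distributions of row `i` of `C`
(weighted by `a`) and row `j` of `D` (weighted by `b`). -/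
noncomputable def anchorW1 {n m : ℕ} (a : Fin n → ℝ) (b : Fin m → ℝ)
    (C : Fin n → Fin n → ℝ) (D : Fin m → Fin m → ℝ) (i : Fin n) (j : Fin m) : ℝ :=
  sInf ((fun Q => ∑ k, ∑ l, Q k l * |C i k - D j l|) '' transportPolytope a b)

/-- The Anchor Energy distance `AE₁` between two MMSets. -/
noncomputable def AE1 {n m : ℕ} (a : Fin n → ℝ) (b : Fin m → ℝ)
    (C : Fin n → Fin n → ℝ) (D : Fin m → Fin m → ℝ) : ℝ :=
  2 * ∑ i, ∑ j, a i * b j * anchorW1 a b C D i j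
    - ∑ i, ∑ j, a i * a j * anchorW1 a a C C i j
    - ∑ i, ∑ j, b i * b j * anchorW1 b b D D i j

open MeasureTheory Set

noncomputable section AEaux

/-- Step function `1_{[x,M)}`. -/
def chi (x M : ℝ) : ℝ → ℝ := (Set.Ico x M).indicator 1

lemma chi_eq_ite (x M t : ℝ) : chi x M t = if x ≤ t ∧ t < M then 1 else 0 := by
  simp [chi, Set.indicator, Set.mem_Ico]

lemma chi_nonneg (x M t : ℝ) : 0 ≤ chi x M t := by
  rw [chi_eq_ite]; split_ifs <;> norm_num

lemma chi_mem01 (x M t : ℝ) : chi x M t = 0 ∨ chi x M t = 1 := by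
  rw [chi_eq_ite]; split_ifs <;> simp

lemma integrable_chi (x M : ℝ) : Integrable (chi x M) := by
  unfold chi
  rw [integrable_indicator_iff measurableSet_Ico]
  exact integrableOn_const (by simp [Real.volume_Ico]) (by simp)

lemma integrable_ind_Ico (u v : ℝ) : Integrable ((Set.Ico u v).indicator (1 : ℝ → ℝ)) := by
  rw [integrable_indicator_iff measurableSet_Ico]
  exact integrableOn_const (by simp [Real.volume_Ico]) (by simp)

lemma integral_ind_Ico (u v : ℝ) (huv : u ≤ v) :
    ∫ t, (Set.Ico u v).indicator (1 : ℝ → ℝ) t = v - u := by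
  have : ((Set.Ico u v).indicator (1 : ℝ → ℝ)) = (Set.Ico u v).indicator (fun _ => (1:ℝ)) := rfl
  rw [this, MeasureTheory.integral_indicator_const (1:ℝ) measurableSet_Ico]
  simp [Real.volume_Ico, ENNReal.toReal_ofReal (sub_nonneg.2 huv), huv]

lemma abs_chi_sub_of_le {x y M : ℝ} (hxy : x ≤ y) (hyM : y ≤ M) (t : ℝ) :
    |chi x M t - chi y M t| = (Set.Ico x y).indicator 1 t := by
  have h : (Set.Ico x y).indicator (1 : ℝ → ℝ) t = if x ≤ t ∧ t < y then 1 else 0 := by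
    simp [Set.indicator, Set.mem_Ico]
  rw [chi_eq_ite, chi_eq_ite, h]
  rcases le_or_gt x t with hx | hx
  · rcases le_or_gt y t with hy | hy
    · rcases lt_or_ge t M with hm | hm
      · rw [if_pos ⟨hx, hm⟩, if_pos ⟨hy, hm⟩, if_neg (by intro hc; linarith [hc.2])]; norm_num
      · rw [if_neg (by intro hc; linarith [hc.2]), if_neg (by intro hc; linarith [hc.2]),
          if_neg (by intro hc; linarith [hc.2])]
        norm_num
    · have hm : t < M := lt_of_lt_of_le hy hyM
      rw [if_pos ⟨hx, hm⟩, if_neg (by intro hc; linarith [hc.1]), if_pos ⟨hx, hy⟩]; norm_num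
  · have hy : t < y := lt_of_lt_of_le hx hxy
    rw [if_neg (by intro hc; linarith [hc.1]), if_neg (by intro hc; linarith [hc.1]),
      if_neg (by intro hc; linarith [hc.1])]
    norm_num

lemma integral_abs_chi_sub {x y M : ℝ} (hxM : x ≤ M) (hyM : y ≤ M) :
    ∫ t, |chi x M t - chi y M t| = |x - y| := by
  rcases le_total x y with hxy | hxy
  · have : ∀ t, |chi x M t - chi y M t| = (Set.Ico x y).indicator 1 t :=
      abs_chi_sub_of_le hxy hyM
    rw [show (fun t => |chi x M t - chi y M t|) = (Set.Ico x y).indicator 1 from funext this]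
    rw [integral_ind_Ico x y hxy, abs_of_nonpos (by linarith)]
    ring
  · have : ∀ t, |chi x M t - chi y M t| = (Set.Ico y x).indicator 1 t := by
      intro t; rw [abs_sub_comm]; exact abs_chi_sub_of_le hxy hxM t
    rw [show (fun t => |chi x M t - chi y M t|) = (Set.Ico y x).indicator 1 from funext this]
    rw [integral_ind_Ico y x hxy, abs_of_nonneg (by linarith)]

lemma integrable_abs_chi_sub (x y M : ℝ) : Integrable (fun t => |chi x M t - chi y M t|) :=
  ((integrable_chi x M).sub (integrable_chi y M)).abs

/-- The (truncated) CDF of the discrete measure with weights `a` and atoms `x`. -/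
def cdf {n : ℕ} (a x : Fin n → ℝ) (M : ℝ) : ℝ → ℝ := fun t => ∑ k, a k * chi (x k) M t

lemma integrable_cdf {n : ℕ} (a x : Fin n → ℝ) (M : ℝ) : Integrable (cdf a x M) := by
  unfold cdf
  exact integrable_finset_sum _ (fun k _ => (integrable_chi (x k) M).const_mul (a k))

lemma cdf_nonneg {n : ℕ} {a : Fin n → ℝ} (ha : ∀ k, 0 ≤ a k) (x : Fin n → ℝ) (M t : ℝ) :
    0 ≤ cdf a x M t :=
  Finset.sum_nonneg fun k _ => mul_nonneg (ha k) (chi_nonneg _ _ _)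

section Tiling
variable {n : ℕ}

/-- Partial sums of weights in index order. -/
def csum (b : Fin n → ℝ) (m : ℕ) : ℝ := ∑ q ∈ univ.filter (fun q : Fin n => (q : ℕ) < m), b q

/-- The interval of mass assigned to index `p`. -/
def Iv (b : Fin n → ℝ) (p : Fin n) : Set ℝ := Set.Ioc (csum b p) (csum b ((p : ℕ) + 1))

lemma csum_zero (b : Fin n → ℝ) : csum b 0 = 0 := by simp [csum]

lemma csum_succ (b : Fin n → ℝ) (p : Fin n) : csum b ((p : ℕ) + 1) = csum b p + b p := by
  unfold csum
  have h : univ.filter (fun q : Fin n => (q : ℕ) < (p : ℕ) + 1)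
      = insert p (univ.filter (fun q : Fin n => (q : ℕ) < (p : ℕ))) := by
    ext q
    simp [Nat.lt_succ_iff_lt_or_eq, Fin.ext_iff, or_comm]
    rw [Fin.le_iff_val_le_val, Fin.lt_iff_val_lt_val]; omega
  rw [h, Finset.sum_insert (by simp)]
  ring

lemma csum_mono {b : Fin n → ℝ} (hb : ∀ q, 0 ≤ b q) {m m' : ℕ} (h : m ≤ m') :
    csum b m ≤ csum b m' := by
  apply Finset.sum_le_sum_of_subset_of_nonneg
  · intro q hq
    simp only [Finset.mem_filter, Finset.mem_univ, true_and] at hq ⊢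
    omega
  · exact fun q _ _ => hb q

lemma csum_nonneg {b : Fin n → ℝ} (hb : ∀ q, 0 ≤ b q) (m : ℕ) : 0 ≤ csum b m := by
  rw [← csum_zero b]; exact csum_mono hb (Nat.zero_le m)

lemma csum_total (b : Fin n → ℝ) : csum b n = ∑ q, b q := by
  unfold csum
  congr 1
  apply Finset.filter_true_of_mem
  exact fun q _ => q.2

lemma vol_Iv {b : Fin n → ℝ} (hb : ∀ q, 0 ≤ b q) (p : Fin n) :
    volume (Iv b p) = ENNReal.ofReal (b p) := by
  rw [Iv, Real.volume_Ioc, csum_succ]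
  ring_nf

lemma Iv_subset {b : Fin n → ℝ} (hb : ∀ q, 0 ≤ b q) (p : Fin n) :
    Iv b p ⊆ Set.Ioc 0 (csum b n) :=
  Set.Ioc_subset_Ioc (csum_nonneg hb _) (csum_mono hb p.2)

lemma Iv_disjoint {b : Fin n → ℝ} (hb : ∀ q, 0 ≤ b q) {p p' : Fin n} (h : p ≠ p') :
    Disjoint (Iv b p) (Iv b p') := by
  have key : ∀ q q' : Fin n, (q : ℕ) < (q' : ℕ) → Disjoint (Iv b q) (Iv b q') := by
    intro q q' hqq'
    rw [Set.disjoint_left]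
    rintro u ⟨_, hu2⟩ ⟨hu3, _⟩
    have : csum b ((q : ℕ) + 1) ≤ csum b q' := csum_mono hb hqq'
    linarith
  rcases lt_or_gt_of_ne (fun hc => h (Fin.ext hc) : (p : ℕ) ≠ (p' : ℕ)) with hlt | hgt
  · exact key _ _ hlt
  · exact (key _ _ hgt).symm

lemma Iv_cover {b : Fin n → ℝ} (hb : ∀ q, 0 ≤ b q) {u : ℝ} (h0 : 0 < u)
    (h1 : u ≤ csum b n) : ∃ p : Fin n, u ∈ Iv b p := by
  by_contra hcon
  push_neg at hcon
  have key : ∀ m : ℕ, m ≤ n → csum b m < u := by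
    intro m
    induction m with
    | zero => intro _; rw [csum_zero]; exact h0
    | succ m ih =>
      intro hm
      have hmn : m < n := hm
      have hlt : csum b m < u := ih (Nat.le_of_lt hmn)
      have := hcon ⟨m, hmn⟩
      rw [Iv] at this
      simp only [Set.mem_Ioc, not_and, not_le] at this
      exact this hlt
  exact absurd h1 (not_le.2 (key n le_rfl))

lemma Iv_galois {b : Fin n → ℝ} (hb : ∀ q, 0 ≤ b q) {y : Fin n → ℝ} (hy : Monotone y) (t : ℝ) :
    (⋃ p ∈ univ.filter (fun p => y p ≤ t), Iv b p)
      = Set.Ioc 0 (∑ p ∈ univ.filter (fun p => y p ≤ t), b p) := by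
  ext u
  simp only [Set.mem_iUnion, Finset.mem_filter, Finset.mem_univ, true_and, Set.mem_Ioc,
    exists_prop]
  constructor
  · rintro ⟨p, hp, hu1, hu2⟩
    constructor
    · calc (0:ℝ) ≤ csum b p := csum_nonneg hb _
        _ < u := hu1
    · refine le_trans hu2 ?_
      rw [csum]
      apply Finset.sum_le_sum_of_subset_of_nonneg
      · intro q hq
        simp only [Finset.mem_filter, Finset.mem_univ, true_and] at hq ⊢
        have hqp : q ≤ p := by
          have : (q : ℕ) ≤ (p : ℕ) := by omega
          exact this
        exact le_trans (hy hqp) hp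
      · exact fun q _ _ => hb q
  · rintro ⟨hu0, hu1⟩
    have hS : (∑ p ∈ univ.filter (fun p => y p ≤ t), b p) ≤ csum b n := by
      rw [csum_total]
      exact Finset.sum_le_sum_of_subset_of_nonneg (Finset.subset_univ _) (fun q _ _ => hb q)
    obtain ⟨p, hp⟩ := Iv_cover hb hu0 (le_trans hu1 hS)
    refine ⟨p, ?_, hp⟩
    by_contra hyp
    push_neg at hyp
    have hsub : (∑ q ∈ univ.filter (fun q => y q ≤ t), b q) ≤ csum b p := by
      rw [csum]
      apply Finset.sum_le_sum_of_subset_of_nonneg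
      · intro q hq
        simp only [Finset.mem_filter, Finset.mem_univ, true_and] at hq ⊢
        by_contra hqp
        push_neg at hqp
        have : p ≤ q := by omega
        exact absurd (le_trans (hy this) hq) (not_le.2 hyp)
      · exact fun q _ _ => hb q
    simp only [Iv, Set.mem_Ioc] at hp
    linarith
end Tiling

lemma chi_of_ge {x M t : ℝ} (h : M ≤ t) : chi x M t = 0 := by
  rw [chi_eq_ite, if_neg (by intro hc; linarith [hc.2])]

lemma abs_sub_of_mem01 {e f : ℝ} (he : e = 0 ∨ e = 1) (hf : f = 0 ∨ f = 1) :
    |e - f| = e + f - 2 * (e * f) := by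
  rcases he with h | h <;> rcases hf with h' | h' <;> subst h <;> subst h' <;> norm_num

lemma abs_sub_eq_add_sub_two_min (x y : ℝ) : |x - y| = x + y - 2 * min x y := by
  rcases le_total x y with h | h
  · rw [min_eq_left h, abs_of_nonpos (by linarith)]; ring
  · rw [min_eq_right h, abs_of_nonneg (by linarith)]; ring

lemma sum_vol_inter {ι : Type*} (s : Finset ι) (J : ι → Set ℝ)
    (hmeas : ∀ r, MeasurableSet (J r)) (hdisj : ∀ r r', r ≠ r' → Disjoint (J r) (J r'))
    (A : Set ℝ) (hA : MeasurableSet A) :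
    ∑ r ∈ s, volume (A ∩ J r) = volume (A ∩ ⋃ r ∈ s, J r) := by
  rw [Set.inter_iUnion₂]
  rw [measure_biUnion_finset]
  · intro r _ r' _ hrr'
    exact Set.disjoint_of_subset Set.inter_subset_right Set.inter_subset_right (hdisj r r' hrr')
  · exact fun r _ => hA.inter (hmeas r)

section Coupling
variable {n m : ℕ}

/-- The monotone (quantile) coupling of two tilings. -/
def mq (b : Fin n → ℝ) (c : Fin m → ℝ) (p : Fin n) (r : Fin m) : ℝ :=
  (volume (Iv b p ∩ Iv c r)).toReal

lemma mq_nonneg (b : Fin n → ℝ) (c : Fin m → ℝ) (p : Fin n) (r : Fin m) :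
    0 ≤ mq b c p r := ENNReal.toReal_nonneg

lemma vol_inter_ne_top (b : Fin n → ℝ) (hb : ∀ q, 0 ≤ b q) (c : Fin m → ℝ) (p : Fin n)
    (r : Fin m) : volume (Iv b p ∩ Iv c r) ≠ ⊤ := by
  refine ne_top_of_le_ne_top ?_ (measure_mono Set.inter_subset_left)
  rw [vol_Iv hb]
  exact ENNReal.ofReal_ne_top

lemma mq_symm (b : Fin n → ℝ) (c : Fin m → ℝ) (p : Fin n) (r : Fin m) :
    mq b c p r = mq c b r p := by rw [mq, mq, Set.inter_comm]

lemma mq_row {b : Fin n → ℝ} (hb : ∀ q, 0 ≤ b q) {c : Fin m → ℝ} (hc : ∀ q, 0 ≤ c q)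
    (htot : ∑ q, b q = ∑ q, c q) (p : Fin n) : ∑ r, mq b c p r = b p := by
  unfold mq
  rw [← ENNReal.toReal_sum (fun r _ => vol_inter_ne_top b hb c p r)]
  rw [sum_vol_inter univ (Iv c) (fun r => measurableSet_Ioc)
    (fun r r' h => Iv_disjoint hc h) (Iv b p) measurableSet_Ioc]
  have hu : (⋃ r ∈ (univ : Finset (Fin m)), Iv c r) = Set.Ioc 0 (csum c m) := by
    ext u
    simp only [Set.mem_iUnion, Finset.mem_univ, exists_prop, true_and]
    constructor
    · rintro ⟨r, hr⟩; exact Iv_subset hc r hr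
    · rintro ⟨h0, h1⟩; exact Iv_cover hc h0 h1
  rw [hu]
  have hsub : Iv b p ⊆ Set.Ioc 0 (csum c m) := by
    have := Iv_subset hb p
    rwa [csum_total, htot, ← csum_total] at this
  rw [Set.inter_eq_left.2 hsub, vol_Iv hb, ENNReal.toReal_ofReal (hb p)]

lemma mq_col {b : Fin n → ℝ} (hb : ∀ q, 0 ≤ b q) {c : Fin m → ℝ} (hc : ∀ q, 0 ≤ c q)
    (htot : ∑ q, b q = ∑ q, c q) (r : Fin m) : ∑ p, mq b c p r = c r := by
  have : ∀ p, mq b c p r = mq c b r p := fun p => mq_symm b c p r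
  simp only [this]
  exact mq_row hc hb htot.symm r

end Coupling

lemma vol_Iv_inter_ne_top {n : ℕ} {b : Fin n → ℝ} (hb : ∀ q, 0 ≤ b q) (p : Fin n)
    (A : Set ℝ) : volume (Iv b p ∩ A) ≠ ⊤ := by
  refine ne_top_of_le_ne_top ?_ (measure_mono Set.inter_subset_left)
  rw [vol_Iv hb]
  exact ENNReal.ofReal_ne_top

lemma cdf_of_lt {n : ℕ} (b y : Fin n → ℝ) {M t : ℝ} (ht : t < M) :
    cdf b y M t = ∑ p ∈ univ.filter (fun p => y p ≤ t), b p := by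
  rw [Finset.sum_filter]
  apply Finset.sum_congr rfl
  intro p _
  rw [chi_eq_ite]
  by_cases h : y p ≤ t
  · rw [if_pos ⟨h, ht⟩, if_pos h, mul_one]
  · rw [if_neg (fun hc => h hc.1), if_neg h, mul_zero]

lemma mq_key {n m : ℕ} {b y : Fin n → ℝ} {c z : Fin m → ℝ}
    (hb : ∀ q, 0 ≤ b q) (hc : ∀ q, 0 ≤ c q) (hy : Monotone y) (hz : Monotone z)
    (htot : ∑ q, b q = ∑ q, c q) (M t : ℝ) :
    ∑ p, ∑ r, mq b c p r * |chi (y p) M t - chi (z r) M t|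
      = |cdf b y M t - cdf c z M t| := by
  rcases le_or_gt M t with ht | ht
  · simp [chi_of_ge ht, cdf]
  set Sy := univ.filter (fun p => y p ≤ t) with hSy
  set Sz := univ.filter (fun r => z r ≤ t) with hSz
  set Fy := ∑ p ∈ Sy, b p with hFy
  set Gz := ∑ r ∈ Sz, c r with hGz
  have hFy0 : 0 ≤ Fy := Finset.sum_nonneg fun q _ => hb q
  have hGz0 : 0 ≤ Gz := Finset.sum_nonneg fun q _ => hc q
  have hsplit : ∀ p r, mq b c p r * |chi (y p) M t - chi (z r) M t|
      = mq b c p r * chi (y p) M t + mq b c p r * chi (z r) M t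
        - 2 * (mq b c p r * (chi (y p) M t * chi (z r) M t)) := by
    intro p r
    rw [abs_sub_of_mem01 (chi_mem01 _ _ _) (chi_mem01 _ _ _)]
    ring
  simp only [hsplit, Finset.sum_sub_distrib, Finset.sum_add_distrib, ← Finset.mul_sum]
  have hA : ∑ p, ∑ r, mq b c p r * chi (y p) M t = cdf b y M t := by
    unfold cdf
    apply Finset.sum_congr rfl
    intro p _
    rw [← Finset.sum_mul, mq_row hb hc htot]
  have hB : ∑ p, ∑ r, mq b c p r * chi (z r) M t = cdf c z M t := by
    unfold cdf
    rw [Finset.sum_comm]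
    apply Finset.sum_congr rfl
    intro r _
    rw [← Finset.sum_mul, mq_col hb hc htot]
  have hC : ∑ p, ∑ r, mq b c p r * (chi (y p) M t * chi (z r) M t) = min Fy Gz := by
    have step1 : ∑ p, ∑ r, mq b c p r * (chi (y p) M t * chi (z r) M t)
        = ∑ p ∈ Sy, ∑ r ∈ Sz, mq b c p r := by
      rw [Finset.sum_filter]
      apply Finset.sum_congr rfl
      intro p _
      split_ifs with h1
      · rw [Finset.sum_filter]
        apply Finset.sum_congr rfl
        intro r _
        split_ifs with h2
        · simp [chi_eq_ite, h1, h2, ht]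
        · simp [chi_eq_ite, h2]
      · apply Finset.sum_eq_zero
        intro r _
        simp [chi_eq_ite, h1]
    rw [step1]
    have hinner : ∀ p, ∑ r ∈ Sz, mq b c p r
        = (volume (Iv b p ∩ Set.Ioc 0 Gz)).toReal := by
      intro p
      unfold mq
      rw [← ENNReal.toReal_sum (fun r _ => vol_Iv_inter_ne_top hb p _)]
      rw [sum_vol_inter Sz (Iv c) (fun r => measurableSet_Ioc)
        (fun r r' h => Iv_disjoint hc h) (Iv b p) measurableSet_Ioc]
      rw [hSz, Iv_galois hc hz t]
    simp only [hinner]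
    rw [← ENNReal.toReal_sum (fun p _ => vol_Iv_inter_ne_top hb p _)]
    have hcomm : ∀ p, Iv b p ∩ Set.Ioc 0 Gz = Set.Ioc 0 Gz ∩ Iv b p :=
      fun p => Set.inter_comm _ _
    simp only [hcomm]
    rw [sum_vol_inter Sy (Iv b) (fun p => measurableSet_Ioc)
      (fun p p' h => Iv_disjoint hb h) (Set.Ioc 0 Gz) measurableSet_Ioc]
    rw [hSy, Iv_galois hb hy t, Set.Ioc_inter_Ioc]
    simp only [sup_idem]
    rw [Real.volume_Ioc]
    rw [ENNReal.toReal_ofReal (by simp [le_min_iff, hFy0, hGz0] : (0:ℝ) ≤ Gz ⊓ Fy - 0)]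
    rw [min_comm]
    ring_nf
  rw [hA, hB, hC, cdf_of_lt b y ht, cdf_of_lt c z ht, ← hSy, ← hSz, ← hFy, ← hGz,
    abs_sub_eq_add_sub_two_min]

lemma mq_cost {n m : ℕ} {b y : Fin n → ℝ} {c z : Fin m → ℝ}
    (hb : ∀ q, 0 ≤ b q) (hc : ∀ q, 0 ≤ c q) (hy : Monotone y) (hz : Monotone z)
    (htot : ∑ q, b q = ∑ q, c q) {M : ℝ} (hyM : ∀ p, y p ≤ M) (hzM : ∀ r, z r ≤ M) :
    ∑ p, ∑ r, mq b c p r * |y p - z r| = ∫ t, |cdf b y M t - cdf c z M t| := by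
  have h1 : ∀ p r, mq b c p r * |y p - z r|
      = ∫ t, mq b c p r * |chi (y p) M t - chi (z r) M t| := by
    intro p r
    rw [MeasureTheory.integral_const_mul, integral_abs_chi_sub (hyM p) (hzM r)]
  simp only [h1]
  have h2 : ∀ p, ∑ r, (∫ t, mq b c p r * |chi (y p) M t - chi (z r) M t|)
      = ∫ t, ∑ r, mq b c p r * |chi (y p) M t - chi (z r) M t| :=
    fun p => (integral_finset_sum univ
      (fun r _ => (integrable_abs_chi_sub (y p) (z r) M).const_mul _)).symm
  simp only [h2]
  rw [← integral_finset_sum univ (fun p _ => integrable_finset_sum univ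
    (fun r _ => (integrable_abs_chi_sub (y p) (z r) M).const_mul _))]
  have := funext (mq_key hb hc hy hz htot M)
  exact congrArg (fun f => ∫ t, f t) this

lemma coupling_cost_lb {n m : ℕ} {a : Fin n → ℝ} {bb : Fin m → ℝ} (x : Fin n → ℝ)
    (w : Fin m → ℝ) {M : ℝ} (hxM : ∀ k, x k ≤ M) (hwM : ∀ l, w l ≤ M)
    {P : Fin n → Fin m → ℝ} (hP : P ∈ transportPolytope a bb) :
    ∫ t, |cdf a x M t - cdf bb w M t| ≤ ∑ k, ∑ l, P k l * |x k - w l| := by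
  obtain ⟨hP0, hProw, hPcol⟩ := hP
  have h1 : ∀ k l, P k l * |x k - w l|
      = ∫ t, P k l * |chi (x k) M t - chi (w l) M t| := by
    intro k l
    rw [MeasureTheory.integral_const_mul, integral_abs_chi_sub (hxM k) (hwM l)]
  simp only [h1]
  have h2 : ∀ k, ∑ l, (∫ t, P k l * |chi (x k) M t - chi (w l) M t|)
      = ∫ t, ∑ l, P k l * |chi (x k) M t - chi (w l) M t| :=
    fun k => (integral_finset_sum univ
      (fun l _ => (integrable_abs_chi_sub (x k) (w l) M).const_mul _)).symm
  simp only [h2]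
  rw [← integral_finset_sum univ (fun k _ => integrable_finset_sum univ
    (fun l _ => (integrable_abs_chi_sub (x k) (w l) M).const_mul _))]
  apply integral_mono
  · exact ((integrable_cdf a x M).sub (integrable_cdf bb w M)).abs
  · exact integrable_finset_sum univ (fun k _ => integrable_finset_sum univ
      (fun l _ => (integrable_abs_chi_sub (x k) (w l) M).const_mul _))
  intro t
  have e1 : cdf a x M t = ∑ k, ∑ l, P k l * chi (x k) M t := by
    unfold cdf
    apply Finset.sum_congr rfl
    intro k _
    rw [← hProw k, Finset.sum_mul]
  have e2 : cdf bb w M t = ∑ k, ∑ l, P k l * chi (w l) M t := by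
    unfold cdf
    rw [Finset.sum_comm]
    apply Finset.sum_congr rfl
    intro l _
    rw [← hPcol l, Finset.sum_mul]
  show |cdf a x M t - cdf bb w M t| ≤ _
  rw [e1, e2, ← Finset.sum_sub_distrib]
  simp only [← Finset.sum_sub_distrib]
  refine (Finset.abs_sum_le_sum_abs _ _).trans (Finset.sum_le_sum fun k _ => ?_)
  refine (Finset.abs_sum_le_sum_abs _ _).trans (Finset.sum_le_sum fun l _ => ?_)
  rw [← mul_sub, abs_mul, abs_of_nonneg (hP0 k l)]

lemma cdf_reindex {n : ℕ} (a x : Fin n → ℝ) (σ : Equiv.Perm (Fin n)) (M : ℝ) :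
    cdf (a ∘ σ) (x ∘ σ) M = cdf a x M := by
  funext t
  exact Fintype.sum_equiv σ _ _ (fun p => rfl)

lemma sInf_cost_eq {n m : ℕ} {a : Fin n → ℝ} {bb : Fin m → ℝ} (ha : IsProbVec a)
    (hb : IsProbVec bb) (x : Fin n → ℝ) (w : Fin m → ℝ) {M : ℝ}
    (hxM : ∀ k, x k ≤ M) (hwM : ∀ l, w l ≤ M) :
    sInf ((fun Q => ∑ k, ∑ l, Q k l * |x k - w l|) '' transportPolytope a bb)
      = ∫ t, |cdf a x M t - cdf bb w M t| := by
  set σ := Tuple.sort x with hσ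
  set τ := Tuple.sort w with hτ
  set b' : Fin n → ℝ := a ∘ σ with hb'
  set y : Fin n → ℝ := x ∘ σ with hy'
  set c' : Fin m → ℝ := bb ∘ τ with hc'
  set z : Fin m → ℝ := w ∘ τ with hz'
  have hy : Monotone y := Tuple.monotone_sort x
  have hz : Monotone z := Tuple.monotone_sort w
  have hb0 : ∀ q, 0 ≤ b' q := fun q => ha.1 _
  have hc0 : ∀ q, 0 ≤ c' q := fun q => hb.1 _
  have htotb : ∑ q, b' q = 1 := by
    rw [hb']
    rw [show ∑ q, (a ∘ σ) q = ∑ q, a q from Fintype.sum_equiv σ _ _ (fun p => rfl)]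
    exact ha.2
  have htotc : ∑ q, c' q = 1 := by
    rw [hc']
    rw [show ∑ q, (bb ∘ τ) q = ∑ q, bb q from Fintype.sum_equiv τ _ _ (fun p => rfl)]
    exact hb.2
  have htot : ∑ q, b' q = ∑ q, c' q := by rw [htotb, htotc]
  have hyM : ∀ p, y p ≤ M := fun p => hxM _
  have hzM : ∀ r, z r ≤ M := fun r => hwM _
  set Q : Fin n → Fin m → ℝ := fun k l => mq b' c' (σ.symm k) (τ.symm l) with hQ
  have hQmem : Q ∈ transportPolytope a bb := by
    refine ⟨fun k l => mq_nonneg _ _ _ _, fun k => ?_, fun l => ?_⟩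
    · rw [show ∑ l, Q k l = ∑ r, mq b' c' (σ.symm k) r from
        Equiv.sum_comp τ.symm (fun r => mq b' c' (σ.symm k) r)]
      rw [mq_row hb0 hc0 htot]
      show a (σ (σ.symm k)) = a k
      rw [Equiv.apply_symm_apply]
    · rw [show ∑ k, Q k l = ∑ p, mq b' c' p (τ.symm l) from
        Equiv.sum_comp σ.symm (fun p => mq b' c' p (τ.symm l))]
      rw [mq_col hb0 hc0 htot]
      show bb (τ (τ.symm l)) = bb l
      rw [Equiv.apply_symm_apply]
  have hQcost : ∑ k, ∑ l, Q k l * |x k - w l|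
      = ∫ t, |cdf a x M t - cdf bb w M t| := by
    have hre : ∑ p, ∑ r, mq b' c' p r * |y p - z r| = ∑ k, ∑ l, Q k l * |x k - w l| := by
      refine Fintype.sum_equiv σ _ _ (fun p => ?_)
      refine Fintype.sum_equiv τ _ _ (fun r => ?_)
      simp only [hQ, Equiv.symm_apply_apply]
      rfl
    rw [← hre, mq_cost hb0 hc0 hy hz htot hyM hzM]
    rw [show cdf b' y M = cdf a x M from cdf_reindex a x σ M,
      show cdf c' z M = cdf bb w M from cdf_reindex bb w τ M]
  refine IsLeast.csInf_eq ⟨⟨Q, hQmem, hQcost⟩, ?_⟩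
  rintro v ⟨P, hP, rfl⟩
  exact coupling_cost_lb x w hxM hwM hP

lemma integrable_ind_Ioc (u v : ℝ) : Integrable ((Set.Ioc u v).indicator (1 : ℝ → ℝ)) := by
  rw [integrable_indicator_iff measurableSet_Ioc]
  exact integrableOn_const (by simp [Real.volume_Ioc]) (by simp)

lemma integral_ind_Ioc (u v : ℝ) (huv : u ≤ v) :
    ∫ t, (Set.Ioc u v).indicator (1 : ℝ → ℝ) t = v - u := by
  have : ((Set.Ioc u v).indicator (1 : ℝ → ℝ)) = (Set.Ioc u v).indicator (fun _ => (1:ℝ)) := rfl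
  rw [this, MeasureTheory.integral_indicator_const (1:ℝ) measurableSet_Ioc]
  simp [Real.volume_Ioc, ENNReal.toReal_ofReal (sub_nonneg.2 huv), huv]

lemma integrable_min {f g : ℝ → ℝ} (hf : Integrable f) (hg : Integrable g) :
    Integrable (fun t => min (f t) (g t)) := by
  have h : (fun t => min (f t) (g t)) = fun t => (f t + g t - |f t - g t|) / 2 := by
    funext t
    rcases le_total (f t) (g t) with h | h
    · rw [min_eq_left h, abs_of_nonpos (by linarith)]; ring
    · rw [min_eq_right h, abs_of_nonneg (by linarith)]; ring
  rw [h]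
  exact ((hf.add hg).sub (hf.sub hg).abs).div_const 2

lemma integral_abs_sub_decomp {f g : ℝ → ℝ} (hf : Integrable f) (hg : Integrable g) :
    ∫ t, |f t - g t| = (∫ t, f t) + (∫ t, g t) - 2 * ∫ t, min (f t) (g t) := by
  have h : (fun t => |f t - g t|) = fun t => f t + g t - 2 * min (f t) (g t) :=
    funext fun t => abs_sub_eq_add_sub_two_min _ _
  have h1 : Integrable (fun t => f t + g t) := hf.add hg
  rw [h, integral_sub h1 ((integrable_min hf hg).const_mul 2),
    integral_add hf hg, MeasureTheory.integral_const_mul]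

lemma iota_eq_ite (p : ℝ) (u : ℝ) :
    (Set.Ioc (0:ℝ) p).indicator (1 : ℝ → ℝ) u = if 0 < u ∧ u ≤ p then 1 else 0 := by
  simp [Set.indicator, Set.mem_Ioc]

lemma min_kernel_psd {ι : Type*} [Fintype ι] (p : ι → ℝ) (hp : ∀ i, 0 ≤ p i) (cc : ι → ℝ) :
    0 ≤ ∑ i, ∑ j, cc i * cc j * min (p i) (p j) := by
  set g : ι → ℝ → ℝ := fun i => (Set.Ioc 0 (p i)).indicator 1 with hg
  have hprod : ∀ i j (u : ℝ), g i u * g j u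
      = (Set.Ioc 0 (min (p i) (p j))).indicator 1 u := by
    intro i j u
    simp only [hg, iota_eq_ite]
    by_cases h0 : 0 < u
    · by_cases h1 : u ≤ p i <;> by_cases h2 : u ≤ p j <;>
        simp [h0, h1, h2, le_min_iff]
    · simp [h0]
  have hgg : ∀ i j, (fun u => g i u * g j u)
      = (Set.Ioc 0 (min (p i) (p j))).indicator 1 := fun i j => funext (hprod i j)
  have hgint : ∀ i j, Integrable (fun u => g i u * g j u) := by
    intro i j; rw [hgg i j]; exact integrable_ind_Ioc _ _
  have hint : ∀ i j, ∫ u, g i u * g j u = min (p i) (p j) := by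
    intro i j
    rw [hgg i j, integral_ind_Ioc 0 _ (le_min (hp i) (hp j)), sub_zero]
  have e1 : ∀ i j, cc i * cc j * min (p i) (p j)
      = ∫ u, (cc i * cc j) * (g i u * g j u) := by
    intro i j
    rw [MeasureTheory.integral_const_mul, hint i j]
  have key : ∑ i, ∑ j, cc i * cc j * min (p i) (p j) = ∫ u, (∑ i, cc i * g i u)^2 := by
    simp only [e1]
    have h2 : ∀ i, ∑ j, (∫ u, (cc i * cc j) * (g i u * g j u))
        = ∫ u, ∑ j, (cc i * cc j) * (g i u * g j u) :=
      fun i => (integral_finset_sum univ (fun j _ => (hgint i j).const_mul _)).symm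
    simp only [h2]
    rw [← integral_finset_sum univ (fun i _ => integrable_finset_sum univ
      (fun j _ => (hgint i j).const_mul _))]
    congr 1
    funext u
    rw [sq, Finset.sum_mul_sum]
    exact Finset.sum_congr rfl fun i _ => Finset.sum_congr rfl fun j _ => by ring
  rw [key]
  exact integral_nonneg fun u => sq_nonneg _

section BForm
variable {ι : Type*} [Fintype ι]

/-- The min-kernel. -/
def Kf (F : ι → ℝ → ℝ) (α β : ι) : ℝ := ∫ t, min (F α t) (F β t)

/-- The associated bilinear form. -/
def Bf (F : ι → ℝ → ℝ) (cc dd : ι → ℝ) : ℝ := ∑ α, ∑ β, cc α * dd β * Kf F α β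

lemma Kf_symm (F : ι → ℝ → ℝ) (α β : ι) : Kf F α β = Kf F β α := by
  unfold Kf
  congr 1
  funext t
  exact min_comm _ _

lemma Bf_nonneg (F : ι → ℝ → ℝ) (hFi : ∀ α, Integrable (F α)) (hF0 : ∀ α t, 0 ≤ F α t)
    (cc : ι → ℝ) : 0 ≤ Bf F cc cc := by
  unfold Bf Kf
  have e1 : ∀ α β : ι, cc α * cc β * ∫ t, min (F α t) (F β t)
      = ∫ t, (cc α * cc β) * min (F α t) (F β t) :=
    fun α β => (MeasureTheory.integral_const_mul _ _).symm
  simp only [e1]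
  have h2 : ∀ α : ι, ∑ β, (∫ t, (cc α * cc β) * min (F α t) (F β t))
      = ∫ t, ∑ β, (cc α * cc β) * min (F α t) (F β t) :=
    fun α => (integral_finset_sum univ
      (fun β _ => (integrable_min (hFi α) (hFi β)).const_mul _)).symm
  simp only [h2]
  rw [← integral_finset_sum univ (fun α _ => integrable_finset_sum univ
    (fun β _ => (integrable_min (hFi α) (hFi β)).const_mul _))]
  apply integral_nonneg
  intro t
  exact min_kernel_psd (fun α => F α t) (fun α => hF0 α t) cc

lemma Bf_symm (F : ι → ℝ → ℝ) (cc dd : ι → ℝ) : Bf F cc dd = Bf F dd cc := by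
  unfold Bf
  rw [Finset.sum_comm]
  refine Finset.sum_congr rfl fun α _ => Finset.sum_congr rfl fun β _ => ?_
  rw [Kf_symm F β α]
  ring

lemma Bf_add_left (F : ι → ℝ → ℝ) (c1 c2 dd : ι → ℝ) :
    Bf F (c1 + c2) dd = Bf F c1 dd + Bf F c2 dd := by
  unfold Bf
  rw [← Finset.sum_add_distrib]
  refine Finset.sum_congr rfl fun α _ => ?_
  rw [← Finset.sum_add_distrib]
  refine Finset.sum_congr rfl fun β _ => ?_
  simp only [Pi.add_apply]
  ring

lemma Bf_expand_quad (F : ι → ℝ → ℝ) (s : ℝ) (cc dd : ι → ℝ) :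
    Bf F (fun α => s * cc α + dd α) (fun α => s * cc α + dd α)
      = s^2 * Bf F cc cc + 2 * s * Bf F cc dd + Bf F dd dd := by
  have hflip : ∑ α, ∑ β, dd α * cc β * Kf F α β = Bf F cc dd := by
    rw [Finset.sum_comm]
    unfold Bf
    refine Finset.sum_congr rfl fun α _ => Finset.sum_congr rfl fun β _ => ?_
    rw [Kf_symm F β α]
    ring
  calc Bf F (fun α => s * cc α + dd α) (fun α => s * cc α + dd α)
      = ∑ α, ∑ β, (s^2 * (cc α * cc β * Kf F α β) + s * (cc α * dd β * Kf F α β)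
        + (s * (dd α * cc β * Kf F α β) + dd α * dd β * Kf F α β)) := by
        unfold Bf
        refine Finset.sum_congr rfl fun α _ => Finset.sum_congr rfl fun β _ => ?_
        show (s * cc α + dd α) * (s * cc β + dd β) * Kf F α β = _
        ring
    _ = s^2 * Bf F cc cc + s * Bf F cc dd
        + (s * (∑ α, ∑ β, dd α * cc β * Kf F α β) + Bf F dd dd) := by
        unfold Bf
        simp only [Finset.sum_add_distrib, Finset.mul_sum]
    _ = s^2 * Bf F cc cc + 2 * s * Bf F cc dd + Bf F dd dd := by
        rw [hflip]; ring

lemma Bf_cs (F : ι → ℝ → ℝ) (hFi : ∀ α, Integrable (F α)) (hF0 : ∀ α t, 0 ≤ F α t)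
    (cc dd : ι → ℝ) :
    Bf F cc dd ≤ Real.sqrt (Bf F cc cc) * Real.sqrt (Bf F dd dd) := by
  set X := Bf F cc cc with hX
  set Y := Bf F dd dd with hY
  set Z := Bf F cc dd with hZ
  have hX0 : 0 ≤ X := Bf_nonneg F hFi hF0 cc
  have hY0 : 0 ≤ Y := Bf_nonneg F hFi hF0 dd
  have hq : ∀ s : ℝ, 0 ≤ X * (s * s) + (2*Z) * s + Y := by
    intro s
    have h := Bf_nonneg F hFi hF0 (fun α => s * cc α + dd α)
    rw [Bf_expand_quad F s cc dd] at h
    nlinarith [h]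
  have hdisc := discrim_le_zero hq
  rw [discrim] at hdisc
  have hZ2 : Z^2 ≤ X * Y := by nlinarith
  calc Z ≤ |Z| := le_abs_self Z
    _ = Real.sqrt (Z^2) := (Real.sqrt_sq_eq_abs Z).symm
    _ ≤ Real.sqrt (X * Y) := Real.sqrt_le_sqrt hZ2
    _ = Real.sqrt X * Real.sqrt Y := Real.sqrt_mul hX0 Y

lemma Bf_sqrt_triangle (F : ι → ℝ → ℝ) (hFi : ∀ α, Integrable (F α))
    (hF0 : ∀ α t, 0 ≤ F α t) (cc dd : ι → ℝ) :
    Real.sqrt (Bf F (cc + dd) (cc + dd))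
      ≤ Real.sqrt (Bf F cc cc) + Real.sqrt (Bf F dd dd) := by
  have hX0 : 0 ≤ Bf F cc cc := Bf_nonneg F hFi hF0 cc
  have hY0 : 0 ≤ Bf F dd dd := Bf_nonneg F hFi hF0 dd
  have hexp : Bf F (cc + dd) (cc + dd)
      = Bf F cc cc + 2 * Bf F cc dd + Bf F dd dd := by
    have h1 : (cc + dd : ι → ℝ) = fun α => (1:ℝ) * cc α + dd α := by
      funext α; simp
    rw [h1, Bf_expand_quad F 1 cc dd]
    ring
  have hcs := Bf_cs F hFi hF0 cc dd
  have hle : Bf F (cc + dd) (cc + dd)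
      ≤ (Real.sqrt (Bf F cc cc) + Real.sqrt (Bf F dd dd))^2 := by
    rw [hexp, add_sq, Real.sq_sqrt hX0, Real.sq_sqrt hY0]
    nlinarith
  calc Real.sqrt (Bf F (cc + dd) (cc + dd))
      ≤ Real.sqrt ((Real.sqrt (Bf F cc cc) + Real.sqrt (Bf F dd dd))^2) :=
        Real.sqrt_le_sqrt hle
    _ = Real.sqrt (Bf F cc cc) + Real.sqrt (Bf F dd dd) :=
        Real.sqrt_sq (add_nonneg (Real.sqrt_nonneg _) (Real.sqrt_nonneg _))

end BForm

lemma energy_expand {N M' : ℕ} {a : Fin N → ℝ} {b : Fin M' → ℝ} (ha : ∑ i, a i = 1)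
    (hb : ∑ j, b j = 1) (T1 : Fin N → ℝ) (T2 : Fin M' → ℝ) (K : Fin N → Fin M' → ℝ) :
    ∑ i, ∑ j, a i * b j * (T1 i + T2 j - 2 * K i j)
      = ∑ i, a i * T1 i + ∑ j, b j * T2 j - 2 * ∑ i, ∑ j, a i * b j * K i j := by
  have h1 : ∀ i, ∑ j, a i * b j * (T1 i + T2 j - 2 * K i j)
      = a i * T1 i * (∑ j, b j) + a i * (∑ j, b j * T2 j) - 2 * ∑ j, a i * b j * K i j := by
    intro i
    have h : a i * T1 i * (∑ j, b j) + a i * (∑ j, b j * T2 j) - 2 * ∑ j, a i * b j * K i j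
        = ∑ j, (a i * T1 i * b j + a i * (b j * T2 j) - 2 * (a i * b j * K i j)) := by
      rw [Finset.mul_sum, Finset.mul_sum, Finset.mul_sum, ← Finset.sum_add_distrib,
        ← Finset.sum_sub_distrib]
    rw [h]
    exact Finset.sum_congr rfl fun j _ => by ring
  simp only [h1, hb, mul_one]
  rw [Finset.sum_sub_distrib, Finset.sum_add_distrib, ← Finset.sum_mul, ha, one_mul,
    ← Finset.mul_sum]

lemma entry_le_sum_abs {n : ℕ} (C : Fin n → Fin n → ℝ) (i k : Fin n) :
    C i k ≤ ∑ i', ∑ k', |C i' k'| := by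
  calc C i k ≤ |C i k| := le_abs_self _
    _ ≤ ∑ k', |C i k'| :=
        Finset.single_le_sum (f := fun k' => |C i k'|) (fun k' _ => abs_nonneg _)
          (Finset.mem_univ k)
    _ ≤ ∑ i', ∑ k', |C i' k'| :=
        Finset.single_le_sum (f := fun i' => ∑ k', |C i' k'|)
          (fun i' _ => Finset.sum_nonneg fun _ _ => abs_nonneg _) (Finset.mem_univ i)

lemma Kf_diag {ι : Type*} [Fintype ι] (F : ι → ℝ → ℝ) (α : ι) :
    Kf F α α = ∫ t, F α t := by
  unfold Kf
  simp only [min_self]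


theorem stmt12 (n1 n2 n3 : ℕ) (h1 : 1 ≤ n1) (h2 : 1 ≤ n2) (h3 : 1 ≤ n3)
    (a1 : Fin n1 → ℝ) (a2 : Fin n2 → ℝ) (a3 : Fin n3 → ℝ)
    (ha1 : IsProbVec a1) (ha2 : IsProbVec a2) (ha3 : IsProbVec a3)
    (C1 : Fin n1 → Fin n1 → ℝ) (C2 : Fin n2 → Fin n2 → ℝ) (C3 : Fin n3 → Fin n3 → ℝ) :
    Real.sqrt (AE1 a1 a3 C1 C3) ≤ Real.sqrt (AE1 a1 a2 C1 C2) + Real.sqrt (AE1 a2 a3 C2 C3) := by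
  set M : ℝ := (∑ i, ∑ k, |C1 i k|) + (∑ i, ∑ k, |C2 i k|) + (∑ i, ∑ k, |C3 i k|) + 1 with hMdef
  have hs1 : (0:ℝ) ≤ ∑ i, ∑ k, |C1 i k| :=
    Finset.sum_nonneg fun _ _ => Finset.sum_nonneg fun _ _ => abs_nonneg _
  have hs2 : (0:ℝ) ≤ ∑ i, ∑ k, |C2 i k| :=
    Finset.sum_nonneg fun _ _ => Finset.sum_nonneg fun _ _ => abs_nonneg _
  have hs3 : (0:ℝ) ≤ ∑ i, ∑ k, |C3 i k| :=
    Finset.sum_nonneg fun _ _ => Finset.sum_nonneg fun _ _ => abs_nonneg _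
  have hM1 : ∀ (i : Fin n1), ∀ k, C1 i k ≤ M := by
    intro i k; have := entry_le_sum_abs C1 i k; rw [hMdef]; linarith
  have hM2 : ∀ (i : Fin n2), ∀ k, C2 i k ≤ M := by
    intro i k; have := entry_le_sum_abs C2 i k; rw [hMdef]; linarith
  have hM3 : ∀ (i : Fin n3), ∀ k, C3 i k ≤ M := by
    intro i k; have := entry_le_sum_abs C3 i k; rw [hMdef]; linarith
  set F : (Fin n1 ⊕ (Fin n2 ⊕ Fin n3)) → ℝ → ℝ :=
    Sum.elim (fun i => cdf a1 (C1 i) M)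
      (Sum.elim (fun i => cdf a2 (C2 i) M) (fun i => cdf a3 (C3 i) M)) with hFdef
  have hFi : ∀ α, Integrable (F α) := by
    rintro (i | i | i) <;> exact integrable_cdf _ _ _
  have hF0 : ∀ α t, 0 ≤ F α t := by
    rintro (i | i | i) t
    · exact cdf_nonneg ha1.1 _ _ _
    · exact cdf_nonneg ha2.1 _ _ _
    · exact cdf_nonneg ha3.1 _ _ _
  -- the general anchorW1 identity
  have key : ∀ {nn mm : ℕ} (a : Fin nn → ℝ) (bb : Fin mm → ℝ), IsProbVec a → IsProbVec bb →
      ∀ (C : Fin nn → Fin nn → ℝ) (D : Fin mm → Fin mm → ℝ) (i : Fin nn) (j : Fin mm),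
      (∀ k, C i k ≤ M) → (∀ l, D j l ≤ M) →
      anchorW1 a bb C D i j = (∫ t, cdf a (C i) M t) + (∫ t, cdf bb (D j) M t)
        - 2 * ∫ t, min (cdf a (C i) M t) (cdf bb (D j) M t) := by
    intro nn mm a bb ha hb C D i j hCb hDb
    have h1 : anchorW1 a bb C D i j = ∫ t, |cdf a (C i) M t - cdf bb (D j) M t| :=
      sInf_cost_eq ha hb (C i) (D j) hCb hDb
    rw [h1, integral_abs_sub_decomp (integrable_cdf _ _ _) (integrable_cdf _ _ _)]
  -- anchorW1 in terms of the kernel Kf F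
  have hanchor11 : ∀ i j, anchorW1 a1 a1 C1 C1 i j
      = Kf F (Sum.inl i) (Sum.inl i) + Kf F (Sum.inl j) (Sum.inl j)
        - 2 * Kf F (Sum.inl i) (Sum.inl j) := by
    intro i j
    rw [key a1 a1 ha1 ha1 C1 C1 i j (hM1 i) (hM1 j), Kf_diag, Kf_diag]
    simp only [hFdef, Sum.elim_inl, Kf]
  have hanchor22 : ∀ i j, anchorW1 a2 a2 C2 C2 i j
      = Kf F (Sum.inr (Sum.inl i)) (Sum.inr (Sum.inl i))
        + Kf F (Sum.inr (Sum.inl j)) (Sum.inr (Sum.inl j))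
        - 2 * Kf F (Sum.inr (Sum.inl i)) (Sum.inr (Sum.inl j)) := by
    intro i j
    rw [key a2 a2 ha2 ha2 C2 C2 i j (hM2 i) (hM2 j), Kf_diag, Kf_diag]
    simp only [hFdef, Sum.elim_inr, Sum.elim_inl, Kf]
  have hanchor33 : ∀ i j, anchorW1 a3 a3 C3 C3 i j
      = Kf F (Sum.inr (Sum.inr i)) (Sum.inr (Sum.inr i))
        + Kf F (Sum.inr (Sum.inr j)) (Sum.inr (Sum.inr j))
        - 2 * Kf F (Sum.inr (Sum.inr i)) (Sum.inr (Sum.inr j)) := by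
    intro i j
    rw [key a3 a3 ha3 ha3 C3 C3 i j (hM3 i) (hM3 j), Kf_diag, Kf_diag]
    simp only [hFdef, Sum.elim_inr, Kf]
  have hanchor12 : ∀ i j, anchorW1 a1 a2 C1 C2 i j
      = Kf F (Sum.inl i) (Sum.inl i)
        + Kf F (Sum.inr (Sum.inl j)) (Sum.inr (Sum.inl j))
        - 2 * Kf F (Sum.inl i) (Sum.inr (Sum.inl j)) := by
    intro i j
    rw [key a1 a2 ha1 ha2 C1 C2 i j (hM1 i) (hM2 j), Kf_diag, Kf_diag]
    simp only [hFdef, Sum.elim_inr, Sum.elim_inl, Kf]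
  have hanchor23 : ∀ i j, anchorW1 a2 a3 C2 C3 i j
      = Kf F (Sum.inr (Sum.inl i)) (Sum.inr (Sum.inl i))
        + Kf F (Sum.inr (Sum.inr j)) (Sum.inr (Sum.inr j))
        - 2 * Kf F (Sum.inr (Sum.inl i)) (Sum.inr (Sum.inr j)) := by
    intro i j
    rw [key a2 a3 ha2 ha3 C2 C3 i j (hM2 i) (hM3 j), Kf_diag, Kf_diag]
    simp only [hFdef, Sum.elim_inr, Sum.elim_inl, Kf]
  have hanchor13 : ∀ i j, anchorW1 a1 a3 C1 C3 i j
      = Kf F (Sum.inl i) (Sum.inl i)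
        + Kf F (Sum.inr (Sum.inr j)) (Sum.inr (Sum.inr j))
        - 2 * Kf F (Sum.inl i) (Sum.inr (Sum.inr j)) := by
    intro i j
    rw [key a1 a3 ha1 ha3 C1 C3 i j (hM1 i) (hM3 j), Kf_diag, Kf_diag]
    simp only [hFdef, Sum.elim_inr, Sum.elim_inl, Kf]
  -- sum over the combined index type
  have hsum3 : ∀ f : (Fin n1 ⊕ (Fin n2 ⊕ Fin n3)) → ℝ,
      ∑ α, f α = ∑ i, f (Sum.inl i)
        + (∑ i, f (Sum.inr (Sum.inl i)) + ∑ i, f (Sum.inr (Sum.inr i))) := by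
    intro f
    rw [Fintype.sum_sum_type, Fintype.sum_sum_type]
  set cc12 : (Fin n1 ⊕ (Fin n2 ⊕ Fin n3)) → ℝ :=
    Sum.elim a1 (Sum.elim (fun j => -a2 j) (fun _ => 0)) with hcc12
  set cc23 : (Fin n1 ⊕ (Fin n2 ⊕ Fin n3)) → ℝ :=
    Sum.elim (fun _ => 0) (Sum.elim a2 (fun j => -a3 j)) with hcc23
  set cc13 : (Fin n1 ⊕ (Fin n2 ⊕ Fin n3)) → ℝ :=
    Sum.elim a1 (Sum.elim (fun _ => 0) (fun j => -a3 j)) with hcc13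
  have hccadd : cc12 + cc23 = cc13 := by
    funext α
    rcases α with i | i | i <;> simp [hcc12, hcc23, hcc13]
  have hB12 : Bf F cc12 cc12
      = (∑ i, ∑ j, a1 i * a1 j * Kf F (Sum.inl i) (Sum.inl j))
        + (∑ i, ∑ j, a2 i * a2 j * Kf F (Sum.inr (Sum.inl i)) (Sum.inr (Sum.inl j)))
        - 2 * ∑ i, ∑ j, a1 i * a2 j * Kf F (Sum.inl i) (Sum.inr (Sum.inl j)) := by
    have hflip : ∑ i, ∑ j, a2 i * a1 j * Kf F (Sum.inr (Sum.inl i)) (Sum.inl j)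
        = ∑ i, ∑ j, a1 i * a2 j * Kf F (Sum.inl i) (Sum.inr (Sum.inl j)) := by
      rw [Finset.sum_comm]
      exact Finset.sum_congr rfl fun i _ => Finset.sum_congr rfl fun j _ => by
        rw [Kf_symm]; ring
    unfold Bf
    simp only [hsum3, Finset.sum_add_distrib, hcc12, Sum.elim_inl, Sum.elim_inr,
      zero_mul, mul_zero, Finset.sum_const_zero, add_zero, zero_add, neg_mul, mul_neg,
      neg_neg, Finset.sum_neg_distrib]
    rw [hflip]
    ring
  have hB23 : Bf F cc23 cc23
      = (∑ i, ∑ j, a2 i * a2 j * Kf F (Sum.inr (Sum.inl i)) (Sum.inr (Sum.inl j)))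
        + (∑ i, ∑ j, a3 i * a3 j * Kf F (Sum.inr (Sum.inr i)) (Sum.inr (Sum.inr j)))
        - 2 * ∑ i, ∑ j, a2 i * a3 j * Kf F (Sum.inr (Sum.inl i)) (Sum.inr (Sum.inr j)) := by
    have hflip : ∑ i, ∑ j, a3 i * a2 j * Kf F (Sum.inr (Sum.inr i)) (Sum.inr (Sum.inl j))
        = ∑ i, ∑ j, a2 i * a3 j * Kf F (Sum.inr (Sum.inl i)) (Sum.inr (Sum.inr j)) := by
      rw [Finset.sum_comm]
      exact Finset.sum_congr rfl fun i _ => Finset.sum_congr rfl fun j _ => by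
        rw [Kf_symm]; ring
    unfold Bf
    simp only [hsum3, Finset.sum_add_distrib, hcc23, Sum.elim_inl, Sum.elim_inr,
      zero_mul, mul_zero, Finset.sum_const_zero, add_zero, zero_add, neg_mul, mul_neg,
      neg_neg, Finset.sum_neg_distrib]
    rw [hflip]
    ring
  have hB13 : Bf F cc13 cc13
      = (∑ i, ∑ j, a1 i * a1 j * Kf F (Sum.inl i) (Sum.inl j))
        + (∑ i, ∑ j, a3 i * a3 j * Kf F (Sum.inr (Sum.inr i)) (Sum.inr (Sum.inr j)))
        - 2 * ∑ i, ∑ j, a1 i * a3 j * Kf F (Sum.inl i) (Sum.inr (Sum.inr j)) := by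
    have hflip : ∑ i, ∑ j, a3 i * a1 j * Kf F (Sum.inr (Sum.inr i)) (Sum.inl j)
        = ∑ i, ∑ j, a1 i * a3 j * Kf F (Sum.inl i) (Sum.inr (Sum.inr j)) := by
      rw [Finset.sum_comm]
      exact Finset.sum_congr rfl fun i _ => Finset.sum_congr rfl fun j _ => by
        rw [Kf_symm]; ring
    unfold Bf
    simp only [hsum3, Finset.sum_add_distrib, hcc13, Sum.elim_inl, Sum.elim_inr,
      zero_mul, mul_zero, Finset.sum_const_zero, add_zero, zero_add, neg_mul, mul_neg,
      neg_neg, Finset.sum_neg_distrib]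
    rw [hflip]
    ring
  -- AE1 in terms of Bf
  have hAE12 : AE1 a1 a2 C1 C2 = 2 * Bf F cc12 cc12 := by
    have e12 : ∑ i, ∑ j, a1 i * a2 j * anchorW1 a1 a2 C1 C2 i j
        = ∑ i, a1 i * Kf F (Sum.inl i) (Sum.inl i)
          + ∑ j, a2 j * Kf F (Sum.inr (Sum.inl j)) (Sum.inr (Sum.inl j))
          - 2 * ∑ i, ∑ j, a1 i * a2 j * Kf F (Sum.inl i) (Sum.inr (Sum.inl j)) := by
      rw [show ∑ i, ∑ j, a1 i * a2 j * anchorW1 a1 a2 C1 C2 i j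
          = ∑ i, ∑ j, a1 i * a2 j * (Kf F (Sum.inl i) (Sum.inl i)
            + Kf F (Sum.inr (Sum.inl j)) (Sum.inr (Sum.inl j))
            - 2 * Kf F (Sum.inl i) (Sum.inr (Sum.inl j))) from
        Finset.sum_congr rfl fun i _ => Finset.sum_congr rfl fun j _ => by
          rw [hanchor12 i j]]
      exact energy_expand ha1.2 ha2.2 _ _ _
    have e11 : ∑ i, ∑ j, a1 i * a1 j * anchorW1 a1 a1 C1 C1 i j
        = ∑ i, a1 i * Kf F (Sum.inl i) (Sum.inl i)
          + ∑ j, a1 j * Kf F (Sum.inl j) (Sum.inl j)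
          - 2 * ∑ i, ∑ j, a1 i * a1 j * Kf F (Sum.inl i) (Sum.inl j) := by
      rw [show ∑ i, ∑ j, a1 i * a1 j * anchorW1 a1 a1 C1 C1 i j
          = ∑ i, ∑ j, a1 i * a1 j * (Kf F (Sum.inl i) (Sum.inl i)
            + Kf F (Sum.inl j) (Sum.inl j)
            - 2 * Kf F (Sum.inl i) (Sum.inl j)) from
        Finset.sum_congr rfl fun i _ => Finset.sum_congr rfl fun j _ => by
          rw [hanchor11 i j]]
      exact energy_expand ha1.2 ha1.2 _ _ _
    have e22 : ∑ i, ∑ j, a2 i * a2 j * anchorW1 a2 a2 C2 C2 i j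
        = ∑ i, a2 i * Kf F (Sum.inr (Sum.inl i)) (Sum.inr (Sum.inl i))
          + ∑ j, a2 j * Kf F (Sum.inr (Sum.inl j)) (Sum.inr (Sum.inl j))
          - 2 * ∑ i, ∑ j, a2 i * a2 j * Kf F (Sum.inr (Sum.inl i)) (Sum.inr (Sum.inl j)) := by
      rw [show ∑ i, ∑ j, a2 i * a2 j * anchorW1 a2 a2 C2 C2 i j
          = ∑ i, ∑ j, a2 i * a2 j * (Kf F (Sum.inr (Sum.inl i)) (Sum.inr (Sum.inl i))
            + Kf F (Sum.inr (Sum.inl j)) (Sum.inr (Sum.inl j))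
            - 2 * Kf F (Sum.inr (Sum.inl i)) (Sum.inr (Sum.inl j))) from
        Finset.sum_congr rfl fun i _ => Finset.sum_congr rfl fun j _ => by
          rw [hanchor22 i j]]
      exact energy_expand ha2.2 ha2.2 _ _ _
    rw [AE1, e12, e11, e22, hB12]
    ring
  have hAE23 : AE1 a2 a3 C2 C3 = 2 * Bf F cc23 cc23 := by
    have e23 : ∑ i, ∑ j, a2 i * a3 j * anchorW1 a2 a3 C2 C3 i j
        = ∑ i, a2 i * Kf F (Sum.inr (Sum.inl i)) (Sum.inr (Sum.inl i))
          + ∑ j, a3 j * Kf F (Sum.inr (Sum.inr j)) (Sum.inr (Sum.inr j))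
          - 2 * ∑ i, ∑ j, a2 i * a3 j * Kf F (Sum.inr (Sum.inl i)) (Sum.inr (Sum.inr j)) := by
      rw [show ∑ i, ∑ j, a2 i * a3 j * anchorW1 a2 a3 C2 C3 i j
          = ∑ i, ∑ j, a2 i * a3 j * (Kf F (Sum.inr (Sum.inl i)) (Sum.inr (Sum.inl i))
            + Kf F (Sum.inr (Sum.inr j)) (Sum.inr (Sum.inr j))
            - 2 * Kf F (Sum.inr (Sum.inl i)) (Sum.inr (Sum.inr j))) from
        Finset.sum_congr rfl fun i _ => Finset.sum_congr rfl fun j _ => by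
          rw [hanchor23 i j]]
      exact energy_expand ha2.2 ha3.2 _ _ _
    have e22 : ∑ i, ∑ j, a2 i * a2 j * anchorW1 a2 a2 C2 C2 i j
        = ∑ i, a2 i * Kf F (Sum.inr (Sum.inl i)) (Sum.inr (Sum.inl i))
          + ∑ j, a2 j * Kf F (Sum.inr (Sum.inl j)) (Sum.inr (Sum.inl j))
          - 2 * ∑ i, ∑ j, a2 i * a2 j * Kf F (Sum.inr (Sum.inl i)) (Sum.inr (Sum.inl j)) := by
      rw [show ∑ i, ∑ j, a2 i * a2 j * anchorW1 a2 a2 C2 C2 i j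
          = ∑ i, ∑ j, a2 i * a2 j * (Kf F (Sum.inr (Sum.inl i)) (Sum.inr (Sum.inl i))
            + Kf F (Sum.inr (Sum.inl j)) (Sum.inr (Sum.inl j))
            - 2 * Kf F (Sum.inr (Sum.inl i)) (Sum.inr (Sum.inl j))) from
        Finset.sum_congr rfl fun i _ => Finset.sum_congr rfl fun j _ => by
          rw [hanchor22 i j]]
      exact energy_expand ha2.2 ha2.2 _ _ _
    have e33 : ∑ i, ∑ j, a3 i * a3 j * anchorW1 a3 a3 C3 C3 i j
        = ∑ i, a3 i * Kf F (Sum.inr (Sum.inr i)) (Sum.inr (Sum.inr i))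
          + ∑ j, a3 j * Kf F (Sum.inr (Sum.inr j)) (Sum.inr (Sum.inr j))
          - 2 * ∑ i, ∑ j, a3 i * a3 j * Kf F (Sum.inr (Sum.inr i)) (Sum.inr (Sum.inr j)) := by
      rw [show ∑ i, ∑ j, a3 i * a3 j * anchorW1 a3 a3 C3 C3 i j
          = ∑ i, ∑ j, a3 i * a3 j * (Kf F (Sum.inr (Sum.inr i)) (Sum.inr (Sum.inr i))
            + Kf F (Sum.inr (Sum.inr j)) (Sum.inr (Sum.inr j))
            - 2 * Kf F (Sum.inr (Sum.inr i)) (Sum.inr (Sum.inr j))) from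
        Finset.sum_congr rfl fun i _ => Finset.sum_congr rfl fun j _ => by
          rw [hanchor33 i j]]
      exact energy_expand ha3.2 ha3.2 _ _ _
    rw [AE1, e23, e22, e33, hB23]
    ring
  have hAE13 : AE1 a1 a3 C1 C3 = 2 * Bf F cc13 cc13 := by
    have e13 : ∑ i, ∑ j, a1 i * a3 j * anchorW1 a1 a3 C1 C3 i j
        = ∑ i, a1 i * Kf F (Sum.inl i) (Sum.inl i)
          + ∑ j, a3 j * Kf F (Sum.inr (Sum.inr j)) (Sum.inr (Sum.inr j))
          - 2 * ∑ i, ∑ j, a1 i * a3 j * Kf F (Sum.inl i) (Sum.inr (Sum.inr j)) := by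
      rw [show ∑ i, ∑ j, a1 i * a3 j * anchorW1 a1 a3 C1 C3 i j
          = ∑ i, ∑ j, a1 i * a3 j * (Kf F (Sum.inl i) (Sum.inl i)
            + Kf F (Sum.inr (Sum.inr j)) (Sum.inr (Sum.inr j))
            - 2 * Kf F (Sum.inl i) (Sum.inr (Sum.inr j))) from
        Finset.sum_congr rfl fun i _ => Finset.sum_congr rfl fun j _ => by
          rw [hanchor13 i j]]
      exact energy_expand ha1.2 ha3.2 _ _ _
    have e11 : ∑ i, ∑ j, a1 i * a1 j * anchorW1 a1 a1 C1 C1 i j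
        = ∑ i, a1 i * Kf F (Sum.inl i) (Sum.inl i)
          + ∑ j, a1 j * Kf F (Sum.inl j) (Sum.inl j)
          - 2 * ∑ i, ∑ j, a1 i * a1 j * Kf F (Sum.inl i) (Sum.inl j) := by
      rw [show ∑ i, ∑ j, a1 i * a1 j * anchorW1 a1 a1 C1 C1 i j
          = ∑ i, ∑ j, a1 i * a1 j * (Kf F (Sum.inl i) (Sum.inl i)
            + Kf F (Sum.inl j) (Sum.inl j)
            - 2 * Kf F (Sum.inl i) (Sum.inl j)) from
        Finset.sum_congr rfl fun i _ => Finset.sum_congr rfl fun j _ => by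
          rw [hanchor11 i j]]
      exact energy_expand ha1.2 ha1.2 _ _ _
    have e33 : ∑ i, ∑ j, a3 i * a3 j * anchorW1 a3 a3 C3 C3 i j
        = ∑ i, a3 i * Kf F (Sum.inr (Sum.inr i)) (Sum.inr (Sum.inr i))
          + ∑ j, a3 j * Kf F (Sum.inr (Sum.inr j)) (Sum.inr (Sum.inr j))
          - 2 * ∑ i, ∑ j, a3 i * a3 j * Kf F (Sum.inr (Sum.inr i)) (Sum.inr (Sum.inr j)) := by
      rw [show ∑ i, ∑ j, a3 i * a3 j * anchorW1 a3 a3 C3 C3 i j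
          = ∑ i, ∑ j, a3 i * a3 j * (Kf F (Sum.inr (Sum.inr i)) (Sum.inr (Sum.inr i))
            + Kf F (Sum.inr (Sum.inr j)) (Sum.inr (Sum.inr j))
            - 2 * Kf F (Sum.inr (Sum.inr i)) (Sum.inr (Sum.inr j))) from
        Finset.sum_congr rfl fun i _ => Finset.sum_congr rfl fun j _ => by
          rw [hanchor33 i j]]
      exact energy_expand ha3.2 ha3.2 _ _ _
    rw [AE1, e13, e11, e33, hB13]
    ring
  -- finish
  have hsqrt2 : ∀ cc : (Fin n1 ⊕ (Fin n2 ⊕ Fin n3)) → ℝ,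
      Real.sqrt (2 * Bf F cc cc) = Real.sqrt 2 * Real.sqrt (Bf F cc cc) :=
    fun cc => Real.sqrt_mul (by norm_num) _
  rw [hAE13, hAE12, hAE23, hsqrt2, hsqrt2, hsqrt2, ← hccadd, ← mul_add]
  refine mul_le_mul_of_nonneg_left ?_ (Real.sqrt_nonneg 2)
  exact Bf_sqrt_triangle F hFi hF0 cc12 cc23
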